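/- Two codes code the same set iff there is an isomorphism of the coded membership relations: if c = c_f and d = c_g are codes (from bijections f : α → tc({x}), g : β → tc({y}) with f(0)=x, g(0)=y), then x = y iff there is a bijection h : α → β with h(0) = 0 and p(ι,ξ) ∈ c ↔ p(h(ι),h(ξ)) ∈ d for all ι, ξ < α. -/

import Mathlib

/-- The class `tc({y})`: sets reachable from `y` by iterated membership,
including `y` itself. -/
def tcRC (y : ZFSet) : Set ZFSet := {z | Relation.ReflTransGen (· ∈ ·) z y}

lemma tcRC_self (y : ZFSet) : y ∈ tcRC y := Relation.ReflTransGen.refl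

lemma tcRC_trans {x z w : ZFSet} (hzw : z ∈ w) (hw : w ∈ tcRC x) : z ∈ tcRC x :=
  Relation.ReflTransGen.head hzw hw

/-- Two codes code the same set iff there is an isomorphism of the coded
membership relations preserving the distinguished point: if `c` codes `x` via
`f : α → tc({x})` (with `f 0 = x`) and `d` codes `y` via `g : β → tc({y})`
(with `g 0 = y`), then `x = y` iff there is a bijection `h : α → β` with
`h 0 = 0` and `p ι ξ ∈ c ↔ p (h ι) (h ξ) ∈ d` for all `ι, ξ < α`. -/
theorem codes_same_set_iff_iso (p : Ordinal → Ordinal → Ordinal)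
    (hp : Function.Injective fun q : Ordinal × Ordinal => p q.1 q.2)
    (x y : ZFSet) (α β : Ordinal) (f g : Ordinal → ZFSet) (c d : Set Ordinal)
    (hf : Set.BijOn f (Set.Iio α) (tcRC x)) (hf0 : f 0 = x)
    (hc : c = {o | ∃ ι ∈ Set.Iio α, ∃ ξ ∈ Set.Iio α, f ι ∈ f ξ ∧ o = p ι ξ})
    (hg : Set.BijOn g (Set.Iio β) (tcRC y)) (hg0 : g 0 = y)
    (hd : d = {o | ∃ ι ∈ Set.Iio β, ∃ ξ ∈ Set.Iio β, g ι ∈ g ξ ∧ o = p ι ξ}) :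
    x = y ↔ ∃ h : Ordinal → Ordinal, Set.BijOn h (Set.Iio α) (Set.Iio β) ∧
      h 0 = 0 ∧ ∀ ι ∈ Set.Iio α, ∀ ξ ∈ Set.Iio α, (p ι ξ ∈ c ↔ p (h ι) (h ξ) ∈ d) := by
  -- membership characterizations
  have hcmem : ∀ ι ∈ Set.Iio α, ∀ ξ ∈ Set.Iio α, (p ι ξ ∈ c ↔ f ι ∈ f ξ) := by
    intro ι hι ξ hξ
    subst hc
    constructor
    · rintro ⟨ι', hι', ξ', hξ', hmem, heq⟩
      have : (ι, ξ) = (ι', ξ') := hp heq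
      obtain ⟨h1, h2⟩ := Prod.mk.injEq .. ▸ this
      rw [h1, h2]; exact hmem
    · intro hmem; exact ⟨ι, hι, ξ, hξ, hmem, rfl⟩
  have hdmem : ∀ ι ∈ Set.Iio β, ∀ ξ ∈ Set.Iio β, (p ι ξ ∈ d ↔ g ι ∈ g ξ) := by
    intro ι hι ξ hξ
    subst hd
    constructor
    · rintro ⟨ι', hι', ξ', hξ', hmem, heq⟩
      have : (ι, ξ) = (ι', ξ') := hp heq
      obtain ⟨h1, h2⟩ := Prod.mk.injEq .. ▸ this
      rw [h1, h2]; exact hmem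
    · intro hmem; exact ⟨ι, hι, ξ, hξ, hmem, rfl⟩
  have hα : (0 : Ordinal) ∈ Set.Iio α := by
    obtain ⟨ι, hι, -⟩ := hf.surjOn (tcRC_self x)
    exact lt_of_le_of_lt (zero_le (a := ι)) hι
  have hβ : (0 : Ordinal) ∈ Set.Iio β := by
    obtain ⟨ι, hι, -⟩ := hg.surjOn (tcRC_self y)
    exact lt_of_le_of_lt (zero_le (a := ι)) hι
  constructor
  · -- forward: x = y, build h := g⁻¹ ∘ f
    intro hxy
    subst hxy
    set h : Ordinal → Ordinal := fun ι => Function.invFunOn g (Set.Iio β) (f ι) with hh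
    have key : ∀ ι ∈ Set.Iio α, h ι ∈ Set.Iio β ∧ g (h ι) = f ι := by
      intro ι hι
      have hmem : f ι ∈ tcRC x := hf.mapsTo hι
      obtain ⟨ξ, hξ, hgξ⟩ := hg.surjOn hmem
      exact ⟨Function.invFunOn_mem ⟨ξ, hξ, hgξ⟩, Function.invFunOn_eq ⟨ξ, hξ, hgξ⟩⟩
    have hbij : Set.BijOn h (Set.Iio α) (Set.Iio β) := by
      refine ⟨fun ι hι => (key ι hι).1, ?_, ?_⟩
      · intro ι₁ h₁ ι₂ h₂ he
        apply hf.injOn h₁ h₂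
        rw [← (key ι₁ h₁).2, ← (key ι₂ h₂).2, he]
      · intro ξ hξ
        obtain ⟨ι, hι, hfι⟩ := hf.surjOn (hg.mapsTo hξ)
        refine ⟨ι, hι, hg.injOn (key ι hι).1 hξ ?_⟩
        rw [(key ι hι).2, hfι]
    have h0 : h 0 = 0 := by
      apply hg.injOn (key 0 hα).1 hβ
      rw [(key 0 hα).2, hf0, hg0]
    refine ⟨h, hbij, h0, fun ι hι ξ hξ => ?_⟩
    rw [hcmem ι hι ξ hξ, hdmem _ (key ι hι).1 _ (key ξ hξ).1, (key ι hι).2, (key ξ hξ).2]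
  · -- backward: rigidity
    rintro ⟨h, hbij, h0, hiso⟩
    have main : ∀ z : ZFSet, ∀ ι ∈ Set.Iio α, f ι = z → g (h ι) = z := by
      intro z
      induction z using ZFSet.inductionOn with
      | _ z IH =>
        intro ι hι hfι
        subst hfι
        apply ZFSet.ext
        intro w
        constructor
        · intro hw
          -- w ∈ g (h ι); g (h ι) ∈ tcRC y
          have hghι : g (h ι) ∈ tcRC y := hg.mapsTo (hbij.mapsTo hι)
          have hw' : w ∈ tcRC y := tcRC_trans hw hghι
          obtain ⟨ξ', hξ', hgξ'⟩ := hg.surjOn hw'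
          obtain ⟨ξ, hξ, hhξ⟩ := hbij.surjOn hξ'
          have hd1 : p (h ξ) (h ι) ∈ d := by
            rw [hdmem _ (hbij.mapsTo hξ) _ (hbij.mapsTo hι), hhξ, hgξ']; exact hw
          have hmem : f ξ ∈ f ι := (hcmem ξ hξ ι hι).mp ((hiso ξ hξ ι hι).mpr hd1)
          have := IH (f ξ) hmem ξ hξ rfl
          rw [← hgξ', ← hhξ, this]; exact hmem
        · intro hw
          have hfι' : f ι ∈ tcRC x := hf.mapsTo hι
          have hw' : w ∈ tcRC x := tcRC_trans hw hfι'
          obtain ⟨ξ, hξ, hfξ⟩ := hf.surjOn hw'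
          have hmem : f ξ ∈ f ι := by rw [hfξ]; exact hw
          have hd1 : p (h ξ) (h ι) ∈ d :=
            (hiso ξ hξ ι hι).mp ((hcmem ξ hξ ι hι).mpr hmem)
          have hg1 : g (h ξ) ∈ g (h ι) :=
            (hdmem _ (hbij.mapsTo hξ) _ (hbij.mapsTo hι)).mp hd1
          have := IH (f ξ) hmem ξ hξ rfl
          rw [← hfξ, ← this]; exact hg1
    have := main x 0 hα hf0
    rw [h0, hg0] at this
    exact this.symm
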